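/- Suppose a, b, c are positive and exactly one of them is even. Then every integer N with N ≡ -abc (mod (2abc)²) is not represented over the rationals by the form ax² + by² + cz². -/

import Mathlib

open NumberTheorySymbols

-- ============ sign tables and finite data ============
def tbN : Fin 4 → ℕ := ![0, 4, 1, 9]
def sgn (m n : ℕ) : ℤ := if m % 4 = 3 ∧ n % 4 = 3 then -1 else 1
def c4 (m : ℕ) : ℤ := if m % 4 = 3 then -1 else 1
def c8 (m : ℕ) : ℤ := if m % 8 = 3 ∨ m % 8 = 5 then -1 else 1
def F (u v w : ℕ) : ℤ := c4 u * c4 v * c4 w * c8 v * c8 w * sgn u v * sgn u w * sgn v w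

lemma F_congr (u v w u' v' w' : ℕ) (hu : u % 8 = u' % 8) (hv : v % 8 = v' % 8)
    (hw : w % 8 = w' % 8) : F u v w = F u' v' w' := by
  have h4u : u % 4 = u' % 4 := by omega
  have h4v : v % 4 = v' % 4 := by omega
  have h4w : w % 4 = w' % 4 := by omega
  unfold F c4 c8 sgn
  rw [h4u, h4v, h4w, hv, hw]

set_option maxHeartbeats 4000000 in
theorem finalcheck : ∀ (i j k : Fin 8) (s t r q : Fin 4),
    (2 ≤ s.val ∨ 2 ≤ t.val ∨ 2 ≤ r.val ∨ 2 ≤ q.val) →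
    (2 * (2 * i.val + 1) * tbN s + (2 * j.val + 1) * tbN t + (2 * k.val + 1) * tbN r
      + 2 * ((2 * i.val + 1) * ((2 * j.val + 1) * (2 * k.val + 1))) * tbN q) % 16 = 0 →
    F (2 * i.val + 1) (2 * j.val + 1) (2 * k.val + 1) = -1 := by decide

-- ============ residue lemmas ============
lemma sq16 (X : ℤ) : ∃ s : Fin 4, ((X : ZMod 16))^2 = ((tbN s : ℕ) : ZMod 16)
    ∧ (¬ (2:ℤ) ∣ X → 2 ≤ s.val) := by
  have hq : 8 * (X / 8) + X % 8 = X := Int.mul_ediv_add_emod X 8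
  have h16 : (16:ℤ) ∣ X^2 - (X % 8)^2 :=
    ⟨4*(X/8)*(X/8) + (X/8)*(X % 8), by linear_combination (-(X + 8*(X/8) + X % 8)) * hq⟩
  have hcast : ((X:ZMod 16))^2 = (((X % 8 : ℤ) : ZMod 16))^2 := by
    have := (ZMod.intCast_zmod_eq_zero_iff_dvd _ 16).mpr h16
    push_cast at this
    linear_combination this
  have hr0 : 0 ≤ X % 8 := Int.emod_nonneg _ (by norm_num)
  have hr8 : X % 8 < 8 := Int.emod_lt_of_pos _ (by norm_num)
  set r := X % 8 with hrdef
  interval_cases r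
  · exact ⟨0, by rw [hcast]; decide, fun h => absurd (show (2:ℤ) ∣ X by omega) h⟩
  · exact ⟨2, by rw [hcast]; decide, fun _ => by decide⟩
  · exact ⟨1, by rw [hcast]; decide, fun h => absurd (show (2:ℤ) ∣ X by omega) h⟩
  · exact ⟨3, by rw [hcast]; decide, fun _ => by decide⟩
  · exact ⟨0, by rw [hcast]; decide, fun h => absurd (show (2:ℤ) ∣ X by omega) h⟩
  · exact ⟨3, by rw [hcast]; decide, fun _ => by decide⟩
  · exact ⟨1, by rw [hcast]; decide, fun h => absurd (show (2:ℤ) ∣ X by omega) h⟩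
  · exact ⟨2, by rw [hcast]; decide, fun _ => by decide⟩

lemma odd16 (A : ℤ) (hA : Odd A) : ∃ i : Fin 8,
    ((A : ZMod 16)) = 2 * (((i:ℕ) : ℕ) : ZMod 16) + 1 ∧ (A % 16 = 2 * (i:ℕ) + 1) := by
  have hq : A = 16 * (A / 16) + A % 16 := (Int.mul_ediv_add_emod A 16).symm
  have h16 : (16:ℤ) ∣ A - A % 16 := ⟨A/16, by omega⟩
  have hcast : ((A:ZMod 16)) = (((A % 16 : ℤ) : ZMod 16)) := by
    have := (ZMod.intCast_zmod_eq_zero_iff_dvd _ 16).mpr h16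
    push_cast at this
    linear_combination this
  have hodd : A % 2 = 1 := Int.odd_iff.mp hA
  have hrodd : (A % 16) % 2 = 1 := by omega
  have hr0 : 0 ≤ A % 16 := Int.emod_nonneg _ (by norm_num)
  have hr8 : A % 16 < 16 := Int.emod_lt_of_pos _ (by norm_num)
  set r := A % 16 with hrdef
  interval_cases r
  · omega
  · exact ⟨0, by rw [hcast]; decide, by decide⟩
  · omega
  · exact ⟨1, by rw [hcast]; decide, by decide⟩
  · omega
  · exact ⟨2, by rw [hcast]; decide, by decide⟩
  · omega
  · exact ⟨3, by rw [hcast]; decide, by decide⟩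
  · omega
  · exact ⟨4, by rw [hcast]; decide, by decide⟩
  · omega
  · exact ⟨5, by rw [hcast]; decide, by decide⟩
  · omega
  · exact ⟨6, by rw [hcast]; decide, by decide⟩
  · omega
  · exact ⟨7, by rw [hcast]; decide, by decide⟩

-- ============ the odd prime local condition ============
lemma odd_prime_legendre (p : ℕ) [hp : Fact p.Prime]
    (A B C N X Y Z D : ℤ)
    (hpA : (p:ℤ) ∣ A) (hp2A : ¬ ((p:ℤ) * p ∣ A))
    (hpB : ¬ (p:ℤ) ∣ B) (hpC : ¬ (p:ℤ) ∣ C)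
    (hNmod : (p:ℤ)^2 ∣ N + A * B * C)
    (heq : A * X^2 + B * Y^2 + C * Z^2 = N * D^2)
    (hnot : ¬ ((p:ℤ) ∣ X ∧ (p:ℤ) ∣ Y ∧ (p:ℤ) ∣ Z ∧ (p:ℤ) ∣ D)) :
    legendreSym p (-(B * C)) = 1 := by
  have hpz : (p:ℤ) ≠ 0 := Int.natCast_ne_zero.mpr hp.out.ne_zero
  have hBC0 : ((-(B * C) : ℤ) : ZMod p) ≠ 0 := by
    rw [Int.cast_neg, Int.cast_mul, neg_ne_zero, mul_ne_zero_iff]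
    constructor <;> rw [Ne, ZMod.intCast_zmod_eq_zero_iff_dvd] <;> assumption
  rw [legendreSym.eq_one_iff p hBC0]
  have hB0 : ((B : ℤ) : ZMod p) ≠ 0 := by rw [Ne, ZMod.intCast_zmod_eq_zero_iff_dvd]; exact hpB
  have hC0 : ((C : ℤ) : ZMod p) ≠ 0 := by rw [Ne, ZMod.intCast_zmod_eq_zero_iff_dvd]; exact hpC
  obtain ⟨A', rfl⟩ := hpA
  have hpN : (p:ℤ) ∣ N := by
    have h1 : (p:ℤ) ∣ N + (p:ℤ) * A' * B * C :=
      dvd_trans (dvd_pow_self _ two_ne_zero) hNmod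
    have h2 : (p:ℤ) ∣ (p:ℤ) * A' * B * C := ⟨A' * B * C, by ring⟩
    simpa using h1.sub h2
  obtain ⟨N', rfl⟩ := hpN
  have hN' : ((N' : ZMod p)) = -((A' : ZMod p) * B * C) := by
    have h1 : (p:ℤ) ∣ N' + A' * B * C := by
      rcases hNmod with ⟨t, ht⟩
      refine ⟨t, ?_⟩
      have : (p:ℤ) * (N' + A' * B * C) = (p:ℤ) * ((p:ℤ) * t) := by
        rw [← mul_assoc, ← sq]; linarith [ht]
      exact mul_left_cancel₀ hpz this
    have := (ZMod.intCast_zmod_eq_zero_iff_dvd _ p).mpr h1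
    push_cast at this
    linear_combination this
  by_cases hY : (p:ℤ) ∣ Y
  · have hmodp : ((p:ℤ) * A' * X^2 + B * Y^2 + C * Z^2 : ℤ) = (p:ℤ) * N' * D^2 := heq
    have hBYZC : (B : ZMod p) * (Y:ZMod p)^2 + (C:ZMod p) * (Z:ZMod p)^2 = 0 := by
      have := congrArg (Int.cast : ℤ → ZMod p) hmodp
      push_cast at this
      rw [ZMod.natCast_self] at this
      linear_combination this
    have hZ : (p:ℤ) ∣ Z := by
      rw [← ZMod.intCast_zmod_eq_zero_iff_dvd]
      have hy0 : ((Y:ℤ) : ZMod p) = 0 := (ZMod.intCast_zmod_eq_zero_iff_dvd _ p).mpr hY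
      rw [hy0] at hBYZC
      have : (C : ZMod p) * (Z:ZMod p)^2 = 0 := by linear_combination hBYZC
      rcases mul_eq_zero.mp this with h | h
      · exact absurd h hC0
      · exact pow_eq_zero_iff two_ne_zero |>.mp h
    obtain ⟨Y', rfl⟩ := hY
    obtain ⟨Z', rfl⟩ := hZ
    have heq2 : A' * X^2 + (p:ℤ) * B * Y'^2 + (p:ℤ) * C * Z'^2 = N' * D^2 := by
      apply mul_left_cancel₀ hpz
      linear_combination heq
    have hmod2 : (A' : ZMod p) * (X : ZMod p)^2 = (N' : ZMod p) * (D : ZMod p)^2 := by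
      have := congrArg (Int.cast : ℤ → ZMod p) heq2
      push_cast at this
      rw [ZMod.natCast_self] at this
      linear_combination this
    have hA'0 : ((A' : ℤ) : ZMod p) ≠ 0 := by
      rw [Ne, ZMod.intCast_zmod_eq_zero_iff_dvd]
      intro h
      exact hp2A (mul_dvd_mul_left _ h)
    have hN'0 : ((N' : ℤ) : ZMod p) ≠ 0 := by
      rw [hN']
      simp only [neg_ne_zero]
      exact mul_ne_zero (mul_ne_zero hA'0 hB0) hC0
    by_cases hD : (p:ℤ) ∣ D
    · have hd0 : ((D:ℤ) : ZMod p) = 0 := (ZMod.intCast_zmod_eq_zero_iff_dvd _ p).mpr hD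
      have hx0 : ((X:ℤ) : ZMod p) = 0 := by
        rw [hd0] at hmod2
        have : (A' : ZMod p) * (X : ZMod p)^2 = 0 := by linear_combination hmod2
        rcases mul_eq_zero.mp this with h | h
        · exact absurd h hA'0
        · exact pow_eq_zero_iff two_ne_zero |>.mp h
      have hX : (p:ℤ) ∣ X := (ZMod.intCast_zmod_eq_zero_iff_dvd _ p).mp hx0
      exact absurd ⟨hX, ⟨Y', rfl⟩, ⟨Z', rfl⟩, hD⟩ hnot
    · have hd0 : ((D:ℤ) : ZMod p) ≠ 0 := by
        rw [Ne, ZMod.intCast_zmod_eq_zero_iff_dvd]; exact hD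
      rw [hN'] at hmod2
      have hX2 : ((X : ZMod p))^2 = -((B:ZMod p) * C) * (D : ZMod p)^2 :=
        mul_left_cancel₀ hA'0 (by linear_combination hmod2)
      refine ⟨(X : ZMod p) * ((D : ZMod p))⁻¹ , ?_⟩
      push_cast
      field_simp
      linear_combination -hX2
  · have hmodp : ((p:ℤ) * A' * X^2 + B * Y^2 + C * Z^2 : ℤ) = (p:ℤ) * N' * D^2 := heq
    have hBYZC : (B : ZMod p) * (Y:ZMod p)^2 + (C:ZMod p) * (Z:ZMod p)^2 = 0 := by
      have := congrArg (Int.cast : ℤ → ZMod p) hmodp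
      push_cast at this
      rw [ZMod.natCast_self] at this
      linear_combination this
    have hy0 : ((Y:ℤ) : ZMod p) ≠ 0 := by
      rw [Ne, ZMod.intCast_zmod_eq_zero_iff_dvd]; exact hY
    have hz0 : ((Z:ℤ) : ZMod p) ≠ 0 := by
      intro h
      rw [h] at hBYZC
      have : (B : ZMod p) * (Y:ZMod p)^2 = 0 := by linear_combination hBYZC
      rcases mul_eq_zero.mp this with h' | h'
      · exact hB0 h'
      · exact hy0 (pow_eq_zero_iff two_ne_zero |>.mp h')
    refine ⟨(B : ZMod p) * (Y : ZMod p) * ((Z : ZMod p))⁻¹, ?_⟩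
    push_cast
    field_simp
    linear_combination (-1 : ZMod p) * hBYZC

-- ============ jacobi symbol lemmas ============
lemma jacobi_eq_one_of_forall (A : ℤ) (n : ℕ)
    (h : ∀ p : ℕ, p.Prime → p ∣ n → ∀ (_ : Fact p.Prime), legendreSym p A = 1) :
    J(A | n) = 1 := by
  rw [jacobiSym]
  apply List.prod_eq_one
  intro x hx
  rw [List.mem_pmap] at hx
  obtain ⟨p, hp, rfl⟩ := hx
  exact h p (Nat.prime_of_mem_primeFactorsList hp) (Nat.dvd_of_mem_primeFactorsList hp) _

lemma qrSign_eq (m n : ℕ) (hm : Odd m) (hn : Odd n) : qrSign m n = sgn m n := by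
  have hm4 : m % 4 = 1 ∨ m % 4 = 3 := Nat.odd_mod_four_iff.mp (Nat.odd_iff.mp hm)
  have hn4 : n % 4 = 1 ∨ n % 4 = 3 := Nat.odd_mod_four_iff.mp (Nat.odd_iff.mp hn)
  unfold sgn
  rcases hm4 with h1 | h1
  · rw [qrSign, ZMod.χ₄_nat_one_mod_four h1, jacobiSym.one_left, if_neg (by omega)]
  · rw [qrSign, ZMod.χ₄_nat_three_mod_four h1, jacobiSym.at_neg_one hn]
    rcases hn4 with h2 | h2
    · rw [ZMod.χ₄_nat_one_mod_four h2, if_neg (by omega)]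
    · rw [ZMod.χ₄_nat_three_mod_four h2, if_pos ⟨h1, h2⟩]

lemma chi4_eq (m : ℕ) (hm : Odd m) : (ZMod.χ₄ m : ℤ) = c4 m := by
  have hm4 : m % 4 = 1 ∨ m % 4 = 3 := Nat.odd_mod_four_iff.mp (Nat.odd_iff.mp hm)
  unfold c4
  rcases hm4 with h1 | h1
  · rw [ZMod.χ₄_nat_one_mod_four h1, if_neg (by omega)]
  · rw [ZMod.χ₄_nat_three_mod_four h1, if_pos h1]

lemma chi8_eq (m : ℕ) (hm : Odd m) : (ZMod.χ₈ m : ℤ) = c8 m := by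
  have h2 : m % 2 = 1 := Nat.odd_iff.mp hm
  have h8 : m % 8 = 1 ∨ m % 8 = 3 ∨ m % 8 = 5 ∨ m % 8 = 7 := by omega
  unfold c8
  rw [ZMod.χ₈_nat_eq_if_mod_eight]
  rcases h8 with h | h | h | h <;> simp [h] <;> omega

lemma jacobi_triple_product (α β γ : ℕ) (hα : Odd α) (hβ : Odd β) (hγ : Odd γ)
    (hαβ : Nat.Coprime α β) (hαγ : Nat.Coprime α γ) (hβγ : Nat.Coprime β γ) :
    J(-((β:ℤ) * (γ:ℤ)) | α) * J(-(2 * (α:ℤ) * (γ:ℤ)) | β) * J(-(2 * (α:ℤ) * (β:ℤ)) | γ)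
      = F α β γ := by
  have e1 : (-((β:ℤ) * (γ:ℤ))) = (-1) * (β:ℤ) * (γ:ℤ) := by ring
  have e2 : (-(2 * (α:ℤ) * (γ:ℤ))) = (-1) * 2 * (α:ℤ) * (γ:ℤ) := by ring
  have e3 : (-(2 * (α:ℤ) * (β:ℤ))) = (-1) * 2 * (α:ℤ) * (β:ℤ) := by ring
  rw [e1, e2, e3]
  simp only [jacobiSym.mul_left]
  rw [jacobiSym.at_neg_one hα, jacobiSym.at_neg_one hβ, jacobiSym.at_neg_one hγ,
    jacobiSym.at_two hβ, jacobiSym.at_two hγ]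
  rw [jacobiSym.quadratic_reciprocity' hβ hα, jacobiSym.quadratic_reciprocity' hγ hα,
    jacobiSym.quadratic_reciprocity' hγ hβ]
  rw [qrSign_eq _ _ hα hβ, qrSign_eq _ _ hα hγ, qrSign_eq _ _ hβ hγ,
    chi4_eq _ hα, chi4_eq _ hβ, chi4_eq _ hγ, chi8_eq _ hβ, chi8_eq _ hγ]
  rcases jacobiSym.eq_one_or_neg_one (a := (α:ℤ)) (b := β) (by simpa [Int.gcd] using hαβ)
    with h1 | h1 <;>
  rcases jacobiSym.eq_one_or_neg_one (a := (α:ℤ)) (b := γ) (by simpa [Int.gcd] using hαγ)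
    with h2 | h2 <;>
  rcases jacobiSym.eq_one_or_neg_one (a := (β:ℤ)) (b := γ) (by simpa [Int.gcd] using hβγ)
    with h3 | h3 <;>
  rw [h1, h2, h3] <;> simp only [F] <;> ring

-- ============ helper ============
lemma prime_not_dvd_of_coprime {p : ℕ} (hp : p.Prime) {u v : ℤ}
    (h : IsCoprime u v) (hpu : (p:ℤ) ∣ u) : ¬ (p:ℤ) ∣ v := by
  intro hpv
  have h1 : (p:ℤ) ∣ ↑(Int.gcd u v) := Int.dvd_coe_gcd hpu hpv
  rw [Int.isCoprime_iff_gcd_eq_one.mp h] at h1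
  have h2 : (p:ℤ) ≤ 1 := Int.le_of_dvd one_pos (by exact_mod_cast h1)
  have h3 : (2:ℤ) ≤ p := by exact_mod_cast hp.two_le
  omega

lemma not_sq_dvd {p : ℕ} (hp : p.Prime) {u : ℤ} (hs : Squarefree u) :
    ¬ ((p:ℤ) * p ∣ u) := by
  intro h
  have := hs _ h
  rw [Int.isUnit_iff] at this
  have h3 : (2:ℤ) ≤ p := by exact_mod_cast hp.two_le
  omega

-- ============ the main case lemma ============
lemma keyCase (a b c N X Y Z D : ℤ)
    (hsa : Squarefree a) (hsb : Squarefree b) (hsc : Squarefree c)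
    (hab : IsCoprime a b) (hac : IsCoprime a c) (hbc : IsCoprime b c)
    (hapos : 0 < a) (hbpos : 0 < b) (hcpos : 0 < c)
    (hEa : Even a) (hOb : Odd b) (hOc : Odd c)
    (hNd : (2*a*b*c)^2 ∣ N + a*b*c)
    (heq : a*X^2 + b*Y^2 + c*Z^2 = N*D^2)
    (hred : ∀ p : ℕ, p.Prime → ¬((p:ℤ) ∣ X ∧ (p:ℤ) ∣ Y ∧ (p:ℤ) ∣ Z ∧ (p:ℤ) ∣ D)) :
    False := by
  obtain ⟨a₀, ha0⟩ := hEa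
  have ha2 : a = 2 * a₀ := by omega
  have ha₀pos : 0 < a₀ := by omega
  have hOa₀ : Odd a₀ := by
    rcases Int.even_or_odd a₀ with he | ho
    · exfalso
      obtain ⟨t, ht⟩ := he
      have := hsa 2 ⟨t, by omega⟩
      rw [Int.isUnit_iff] at this
      omega
    · exact ho
  set α := a₀.natAbs with hαdef
  set β := b.natAbs with hβdef
  set γ := c.natAbs with hγdef
  have hαz : (α:ℤ) = a₀ := Int.natAbs_of_nonneg ha₀pos.le
  have hβz : (β:ℤ) = b := Int.natAbs_of_nonneg hbpos.le
  have hγz : (γ:ℤ) = c := Int.natAbs_of_nonneg hcpos.le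
  have hOα : Odd α := Int.natAbs_odd.mpr hOa₀
  have hOβ : Odd β := Int.natAbs_odd.mpr hOb
  have hOγ : Odd γ := Int.natAbs_odd.mpr hOc
  have hab0 : IsCoprime a₀ b := by
    rw [ha2] at hab
    exact IsCoprime.of_mul_left_right hab
  have hac0 : IsCoprime a₀ c := by
    rw [ha2] at hac
    exact IsCoprime.of_mul_left_right hac
  have hαβ : Nat.Coprime α β := by
    have := Int.isCoprime_iff_gcd_eq_one.mp hab0
    simpa [Int.gcd, hαdef, hβdef] using this
  have hαγ : Nat.Coprime α γ := by
    have := Int.isCoprime_iff_gcd_eq_one.mp hac0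
    simpa [Int.gcd, hαdef, hγdef] using this
  have hβγ : Nat.Coprime β γ := by
    have := Int.isCoprime_iff_gcd_eq_one.mp hbc
    simpa [Int.gcd, hβdef, hγdef] using this
  -- the three Jacobi symbols are 1
  have hJ1 : J(-((β:ℤ) * (γ:ℤ)) | α) = 1 := by
    rw [show -((β:ℤ) * (γ:ℤ)) = -(b * c) by rw [hβz, hγz]]
    apply jacobi_eq_one_of_forall
    intro p hp hpd _
    have hpa₀ : (p:ℤ) ∣ a₀ := by
      rw [← hαz]
      exact_mod_cast Int.natCast_dvd_natCast.mpr hpd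
    have hpa : (p:ℤ) ∣ a := by rw [ha2]; exact Dvd.dvd.mul_left hpa₀ 2
    refine odd_prime_legendre p a b c N X Y Z D hpa (not_sq_dvd hp hsa)
      (prime_not_dvd_of_coprime hp hab hpa) (prime_not_dvd_of_coprime hp hac hpa)
      ?_ heq (hred p hp)
    refine dvd_trans ?_ hNd
    have h1 : (p:ℤ) ∣ 2*a*b*c := ((hpa.mul_left 2).mul_right b).mul_right c
    exact pow_dvd_pow_of_dvd h1 2
  have hJ2 : J(-(2 * (α:ℤ) * (γ:ℤ)) | β) = 1 := by
    rw [show -(2 * (α:ℤ) * (γ:ℤ)) = -(a * c) by rw [hαz, hγz, ha2]]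
    apply jacobi_eq_one_of_forall
    intro p hp hpd _
    have hpb : (p:ℤ) ∣ b := by
      rw [← hβz]
      exact_mod_cast Int.natCast_dvd_natCast.mpr hpd
    have h1 : (p:ℤ) ∣ 2*a*b*c := ((hpb.mul_left (2*a)).mul_right c)
    have h2 : ((p:ℤ))^2 ∣ N + b*a*c := by
      rw [show N + b*a*c = N + a*b*c from by ring]
      exact dvd_trans (pow_dvd_pow_of_dvd h1 2) hNd
    exact odd_prime_legendre p b a c N Y X Z D hpb (not_sq_dvd hp hsb)
      (prime_not_dvd_of_coprime hp hab.symm hpb) (prime_not_dvd_of_coprime hp hbc hpb)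
      h2 (by linarith) (by have := hred p hp; tauto)
  have hJ3 : J(-(2 * (α:ℤ) * (β:ℤ)) | γ) = 1 := by
    rw [show -(2 * (α:ℤ) * (β:ℤ)) = -(a * b) by rw [hαz, hβz, ha2]]
    apply jacobi_eq_one_of_forall
    intro p hp hpd _
    have hpc : (p:ℤ) ∣ c := by
      rw [← hγz]
      exact_mod_cast Int.natCast_dvd_natCast.mpr hpd
    have h1 : (p:ℤ) ∣ 2*a*b*c := hpc.mul_left (2*a*b)
    have h2 : ((p:ℤ))^2 ∣ N + c*a*b := by
      rw [show N + c*a*b = N + a*b*c from by ring]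
      exact dvd_trans (pow_dvd_pow_of_dvd h1 2) hNd
    exact odd_prime_legendre p c a b N Z X Y D hpc (not_sq_dvd hp hsc)
      (prime_not_dvd_of_coprime hp hac.symm hpc) (prime_not_dvd_of_coprime hp hbc.symm hpc)
      h2 (by linarith) (by have := hred p hp; tauto)
  have hF1 : F α β γ = 1 := by
    rw [← jacobi_triple_product α β γ hOα hOβ hOγ hαβ hαγ hβγ, hJ1, hJ2, hJ3]
    ring
  -- mod 16 analysis
  have h16 : (16:ℤ) ∣ N + a*b*c := dvd_trans ⟨(a₀*b*c)^2, by rw [ha2]; ring⟩ hNd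
  have hNz : ((N : ZMod 16)) + (a : ZMod 16) * (b : ZMod 16) * (c : ZMod 16) = 0 := by
    have := (ZMod.intCast_zmod_eq_zero_iff_dvd _ 16).mpr h16
    push_cast at this
    linear_combination this
  have ha2z : ((a : ZMod 16)) = 2 * ((a₀ : ZMod 16)) := by
    have := congrArg (Int.cast : ℤ → ZMod 16) ha2
    push_cast at this
    exact this
  have heqz : (a : ZMod 16) * ((X:ZMod 16))^2 + (b : ZMod 16) * ((Y:ZMod 16))^2
      + (c : ZMod 16) * ((Z:ZMod 16))^2 = (N : ZMod 16) * ((D:ZMod 16))^2 := by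
    have := congrArg (Int.cast : ℤ → ZMod 16) heq
    push_cast at this
    exact this
  obtain ⟨i, hi, hi'⟩ := odd16 a₀ hOa₀
  obtain ⟨j, hj, hj'⟩ := odd16 b hOb
  obtain ⟨k, hk, hk'⟩ := odd16 c hOc
  obtain ⟨s, hs, hs'⟩ := sq16 X
  obtain ⟨t, ht, ht'⟩ := sq16 Y
  obtain ⟨r, hr, hr'⟩ := sq16 Z
  obtain ⟨q, hq, hq'⟩ := sq16 D
  have hnat : (2 * (2 * i.val + 1) * tbN s + (2 * j.val + 1) * tbN t + (2 * k.val + 1) * tbN r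
      + 2 * ((2 * i.val + 1) * ((2 * j.val + 1) * (2 * k.val + 1))) * tbN q) % 16 = 0 := by
    have hzz : ((2 * (2 * i.val + 1) * tbN s + (2 * j.val + 1) * tbN t + (2 * k.val + 1) * tbN r
        + 2 * ((2 * i.val + 1) * ((2 * j.val + 1) * (2 * k.val + 1))) * tbN q : ℕ) : ZMod 16)
        = 0 := by
      push_cast
      rw [← hi, ← hj, ← hk, ← hs, ← ht, ← hr, ← hq]
      linear_combination heqz - (((X:ZMod 16))^2 + ((D:ZMod 16))^2 * (b : ZMod 16) * (c:ZMod 16)) * ha2z + ((D:ZMod 16))^2 * hNz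
    have := (ZMod.natCast_eq_zero_iff _ 16).mp hzz
    omega
  have hsome : 2 ≤ s.val ∨ 2 ≤ t.val ∨ 2 ≤ r.val ∨ 2 ≤ q.val := by
    by_contra hall
    push_neg at hall
    obtain ⟨h1, h2, h3, h4⟩ := hall
    exact hred 2 Nat.prime_two
      ⟨not_not.mp (mt hs' (by omega)), not_not.mp (mt ht' (by omega)),
       not_not.mp (mt hr' (by omega)), not_not.mp (mt hq' (by omega))⟩
  have hfin := finalcheck i j k s t r q hsome hnat
  have hcong : F α β γ = F (2 * i.val + 1) (2 * j.val + 1) (2 * k.val + 1) := by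
    apply F_congr
    · have h1 : (α : ℤ) % 16 = 2 * i.val + 1 := by rw [hαz]; exact_mod_cast hi'
      have h2 : (i.val : ℤ) < 8 := by exact_mod_cast i.isLt
      omega
    · have h1 : (β : ℤ) % 16 = 2 * j.val + 1 := by rw [hβz]; exact_mod_cast hj'
      have h2 : (j.val : ℤ) < 8 := by exact_mod_cast j.isLt
      omega
    · have h1 : (γ : ℤ) % 16 = 2 * k.val + 1 := by rw [hγz]; exact_mod_cast hk'
      have h2 : (k.val : ℤ) < 8 := by exact_mod_cast k.isLt
      omega
  rw [hcong, hfin] at hF1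
  norm_num at hF1

-- ============ main theorem ============
theorem stmt5 (a b c : ℤ) (ha : a ≠ 0) (hb : b ≠ 0) (hc : c ≠ 0)
    (hsa : Squarefree a) (hsb : Squarefree b) (hsc : Squarefree c)
    (hab : IsCoprime a b) (hac : IsCoprime a c) (hbc : IsCoprime b c)
    (hapos : 0 < a) (hbpos : 0 < b) (hcpos : 0 < c)
    (hone : (Even a ∧ Odd b ∧ Odd c) ∨ (Odd a ∧ Even b ∧ Odd c) ∨ (Odd a ∧ Odd b ∧ Even c))
    (N : ℤ) (hN : N ≡ -(a * b * c) [ZMOD (2 * a * b * c) ^ 2]) :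
    ¬ ∃ x y z : ℚ, (a : ℚ) * x ^ 2 + (b : ℚ) * y ^ 2 + (c : ℚ) * z ^ 2 = (N : ℚ) := by
  rintro ⟨x, y, z, hxyz⟩
  have hdvd : (2*a*b*c)^2 ∣ N + a*b*c := by
    have h := Int.ModEq.dvd hN
    rw [show N + a*b*c = -(-(a*b*c) - N) by ring]
    exact dvd_neg.mpr h
  -- clear denominators
  have hdx : ((x.den:ℚ)) ≠ 0 := Nat.cast_ne_zero.mpr x.den_nz
  have hdy : ((y.den:ℚ)) ≠ 0 := Nat.cast_ne_zero.mpr y.den_nz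
  have hdz : ((z.den:ℚ)) ≠ 0 := Nat.cast_ne_zero.mpr z.den_nz
  have hx : (x.num : ℚ) = x * x.den := (div_eq_iff hdx).mp (Rat.num_div_den x)
  have hy : (y.num : ℚ) = y * y.den := (div_eq_iff hdy).mp (Rat.num_div_den y)
  have hz : (z.num : ℚ) = z * z.den := (div_eq_iff hdz).mp (Rat.num_div_den z)
  have key : a * (x.num * y.den * z.den)^2 + b * (y.num * x.den * z.den)^2
      + c * (z.num * x.den * y.den)^2 = N * ((x.den : ℤ) * y.den * z.den)^2 := by
    have hQ : (a:ℚ) * ((x.num:ℚ) * y.den * z.den)^2 + b * ((y.num:ℚ) * x.den * z.den)^2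
        + c * ((z.num:ℚ) * x.den * y.den)^2 = N * ((x.den:ℚ) * y.den * z.den)^2 := by
      rw [hx, hy, hz]
      linear_combination ((x.den:ℚ) * y.den * z.den)^2 * hxyz
    exact_mod_cast hQ
  set X₀ := x.num * y.den * z.den with hX₀
  set Y₀ := y.num * (x.den:ℤ) * z.den with hY₀
  set Z₀ := z.num * (x.den:ℤ) * y.den with hZ₀
  set Q₀ := ((x.den : ℤ)) * y.den * z.den with hQ₀
  have hQ0 : Q₀ ≠ 0 := by
    rw [hQ₀]
    exact mul_ne_zero (mul_ne_zero (Int.natCast_ne_zero.mpr x.den_nz)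
      (Int.natCast_ne_zero.mpr y.den_nz)) (Int.natCast_ne_zero.mpr z.den_nz)
  -- divide by the gcd
  set g : ℕ := Int.gcd (Int.gcd (Int.gcd X₀ Y₀) Z₀) Q₀ with hgdef
  have hgQ : (g:ℤ) ∣ Q₀ := Int.gcd_dvd_right _ _
  have hg3 : (g:ℤ) ∣ (Int.gcd (Int.gcd X₀ Y₀) Z₀ : ℤ) := Int.gcd_dvd_left _ _
  have hgZ : (g:ℤ) ∣ Z₀ := hg3.trans (Int.gcd_dvd_right _ _)
  have hg2 : (g:ℤ) ∣ (Int.gcd X₀ Y₀ : ℤ) := hg3.trans (Int.gcd_dvd_left _ _)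
  have hgX : (g:ℤ) ∣ X₀ := hg2.trans (Int.gcd_dvd_left _ _)
  have hgY : (g:ℤ) ∣ Y₀ := hg2.trans (Int.gcd_dvd_right _ _)
  have hgne : (g:ℤ) ≠ 0 := by
    simp only [Ne, Int.natCast_eq_zero, hgdef]
    intro h
    exact hQ0 (Int.gcd_eq_zero_iff.mp h).2
  obtain ⟨X, hX⟩ := hgX
  obtain ⟨Y, hY⟩ := hgY
  obtain ⟨Z, hZc⟩ := hgZ
  obtain ⟨Dq, hD⟩ := hgQ
  have heq : a*X^2 + b*Y^2 + c*Z^2 = N*Dq^2 := by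
    have h2 : ((g:ℤ))^2 * (a*X^2 + b*Y^2 + c*Z^2) = ((g:ℤ))^2 * (N*Dq^2) := by
      rw [hX, hY, hZc, hD] at key
      linear_combination key
    exact mul_left_cancel₀ (pow_ne_zero 2 hgne) h2
  have hred : ∀ p : ℕ, p.Prime → ¬((p:ℤ) ∣ X ∧ (p:ℤ) ∣ Y ∧ (p:ℤ) ∣ Z ∧ (p:ℤ) ∣ Dq) := by
    rintro p hp ⟨h1, h2, h3, h4⟩
    have d1 : (g:ℤ) * p ∣ X₀ := by rw [hX]; exact mul_dvd_mul_left _ h1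
    have d2 : (g:ℤ) * p ∣ Y₀ := by rw [hY]; exact mul_dvd_mul_left _ h2
    have d3 : (g:ℤ) * p ∣ Z₀ := by rw [hZc]; exact mul_dvd_mul_left _ h3
    have d4 : (g:ℤ) * p ∣ Q₀ := by rw [hD]; exact mul_dvd_mul_left _ h4
    have dg : (g:ℤ) * p ∣ (g:ℤ) := by
      rw [hgdef]
      exact Int.dvd_coe_gcd (Int.dvd_coe_gcd (Int.dvd_coe_gcd d1 d2) d3) d4
    have hple : (p:ℤ) ∣ 1 := by
      obtain ⟨t, ht⟩ := dg
      refine ⟨t, ?_⟩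
      apply mul_left_cancel₀ hgne
      rw [← mul_assoc]
      linarith [ht]
    have h5 : (p:ℤ) ≤ 1 := Int.le_of_dvd one_pos hple
    have h6 : (2:ℤ) ≤ p := by exact_mod_cast hp.two_le
    omega
  rcases hone with ⟨hEa, hOb, hOc⟩ | ⟨hOa, hEb, hOc⟩ | ⟨hOa, hOb, hEc⟩
  · exact keyCase a b c N X Y Z Dq hsa hsb hsc hab hac hbc hapos hbpos hcpos hEa hOb hOc
      hdvd heq hred
  · refine keyCase b a c N Y X Z Dq hsb hsa hsc hab.symm hbc hac hbpos hapos hcpos hEb hOa hOc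
      ?_ (by linarith) (fun p hp => by have := hred p hp; tauto)
    rw [show (2*b*a*c)^2 = (2*a*b*c)^2 from by ring, show N + b*a*c = N + a*b*c from by ring]
    exact hdvd
  · refine keyCase c a b N Z X Y Dq hsc hsa hsb hac.symm hbc.symm hab hcpos hapos hbpos hEc hOa hOb
      ?_ (by linarith) (fun p hp => by have := hred p hp; tauto)
    rw [show (2*c*a*b)^2 = (2*a*b*c)^2 from by ring, show N + c*a*b = N + a*b*c from by ring]
    exact hdvd
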